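/- arXiv:1205.5617 — 2 statements merged into one kernel-verified Lean document; each statement's English description precedes it below -/
import Mathlib

section
/- Let ν, ν_{f,g}, ν_f, ν_g be finite Borel measures on a measurable space K with ν_{f,g} a signed measure, ν_f, ν_g positive, all absolutely continuous with respect to ν, and suppose |ν_{f,g}(B)| ≤ √(ν_f(B))·√(ν_g(B)) for every Borel set B. Then for all bounded measurable functions h₁, h₂ on K, |∫_K h₁ h₂ dν_{f,g}| ≤ (∫_K h₁² dν_f)^{1/2} (∫_K h₂² dν_g)^{1/2}. -/
open MeasureTheory
open scoped ENNReal

private lemma am_gm_sqrt' {x y t : ℝ} (hx : 0 ≤ x) (hy : 0 ≤ y) (ht : 0 < t) :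
    Real.sqrt x * Real.sqrt y ≤ (t * x + y / t) / 2 := by
  have h1 : Real.sqrt (t * x) * Real.sqrt (y / t) = Real.sqrt x * Real.sqrt y := by
    rw [← Real.sqrt_mul (by positivity), ← Real.sqrt_mul hx]
    congr 1
    field_simp
  nlinarith [sq_nonneg (Real.sqrt (t * x) - Real.sqrt (y / t)),
    Real.sq_sqrt (show (0:ℝ) ≤ t * x by positivity),
    Real.sq_sqrt (show (0:ℝ) ≤ y / t by positivity)]

private lemma le_sqrt_mul_sqrt_aux' {a b c : ℝ} (ha : 0 ≤ a) (hb : 0 ≤ b)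
    (h : ∀ t : ℚ, 0 < t → c ≤ ((t : ℝ) * a + b / t) / 2) :
    c ≤ Real.sqrt a * Real.sqrt b := by
  have hreal : ∀ t : ℝ, 0 < t → c ≤ (t * a + b / t) / 2 := by
    intro t ht
    refine le_of_forall_pos_le_add fun ε hε => ?_
    have hδ : (0:ℝ) < ε / (a + 1) := by positivity
    obtain ⟨s, hs1, hs2⟩ := exists_rat_btwn (lt_add_of_pos_right t hδ)
    have hs0 : (0:ℝ) < s := ht.trans hs1
    have hc := h s (by exact_mod_cast hs0)
    have h1 : (s:ℝ) * a ≤ t * a + ε := by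
      have : (s:ℝ) * a ≤ (t + ε / (a + 1)) * a := by nlinarith
      have h2 : ε / (a + 1) * a ≤ ε := by
        rw [div_mul_eq_mul_div, div_le_iff₀ (by positivity)]
        nlinarith
      nlinarith
    have h2 : b / s ≤ b / t := div_le_div_of_nonneg_left hb ht hs1.le |>.trans_eq rfl
    linarith
  rcases eq_or_lt_of_le ha with ha0 | ha0
  · have hc0 : c ≤ 0 := by
      refine le_of_forall_pos_le_add fun ε hε => ?_
      have hkey := hreal (b / ε + 1) (by positivity)
      rw [← ha0] at hkey
      have hbt : b / (b / ε + 1) ≤ ε := by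
        rw [div_le_iff₀ (by positivity)]
        have hball : ε * (b / ε) = b := by field_simp
        nlinarith [div_nonneg hb hε.le]
      simp only [mul_zero, zero_add] at hkey
      linarith
    have : (0:ℝ) ≤ Real.sqrt a * Real.sqrt b := by positivity
    linarith
  rcases eq_or_lt_of_le hb with hb0 | hb0
  · have hc0 : c ≤ 0 := by
      refine le_of_forall_pos_le_add fun ε hε => ?_
      have hkey := hreal (2 * ε / a) (by positivity)
      rw [← hb0] at hkey
      have : 2 * ε / a * a = 2 * ε := by field_simp
      rw [this] at hkey
      simp at hkey
      linarith
    have : (0:ℝ) ≤ Real.sqrt a * Real.sqrt b := by positivity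
    linarith
  · have hsa : 0 < Real.sqrt a := Real.sqrt_pos.mpr ha0
    have hsb : 0 < Real.sqrt b := Real.sqrt_pos.mpr hb0
    have hkey := hreal (Real.sqrt b / Real.sqrt a) (by positivity)
    have ha2 := Real.sq_sqrt ha
    have hb2 := Real.sq_sqrt hb
    have heq : (Real.sqrt b / Real.sqrt a) * a + b / (Real.sqrt b / Real.sqrt a)
        = 2 * (Real.sqrt a * Real.sqrt b) := by
      field_simp
      nlinarith
    linarith [hkey, heq.symm ▸ hkey]

theorem stmt_8 {K : Type*} [MeasurableSpace K]
    (ν : Measure K) [SigmaFinite ν]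
    (νfg : MeasureTheory.SignedMeasure K)
    (νf νg : Measure K) [IsFiniteMeasure νf] [IsFiniteMeasure νg]
    (hacfg : ∀ B : Set K, MeasurableSet B → ν B = 0 → νfg B = 0)
    (hacf : νf ≪ ν) (hacg : νg ≪ ν)
    (hCS : ∀ B : Set K, MeasurableSet B →
      |νfg B| ≤ Real.sqrt ((νf B).toReal) * Real.sqrt ((νg B).toReal))
    (h₁ h₂ : K → ℝ) (hm₁ : Measurable h₁) (hm₂ : Measurable h₂)
    (C₁ : ℝ) (hb₁ : ∀ x, |h₁ x| ≤ C₁) (C₂ : ℝ) (hb₂ : ∀ x, |h₂ x| ≤ C₂) :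
    |(∫ x, h₁ x * h₂ x ∂νfg.toJordanDecomposition.posPart)
        - ∫ x, h₁ x * h₂ x ∂νfg.toJordanDecomposition.negPart|
      ≤ Real.sqrt (∫ x, (h₁ x) ^ 2 ∂νf) * Real.sqrt (∫ x, (h₂ x) ^ 2 ∂νg) := by
  set p := νfg.toJordanDecomposition.posPart with hpdef
  set q := νfg.toJordanDecomposition.negPart with hqdef
  -- absolute continuity of p and q w.r.t. ν
  have hvac : νfg ≪ᵥ ν.toENNRealVectorMeasure :=
    VectorMeasure.AbsolutelyContinuous.mk fun B hB h0 =>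
      hacfg B hB (by rwa [Measure.toENNRealVectorMeasure_apply_measurable hB] at h0)
  have htv : νfg.totalVariation ≪ ν := by
    have h := (SignedMeasure.absolutelyContinuous_ennreal_iff νfg
      ν.toENNRealVectorMeasure).mp hvac
    rwa [VectorMeasure.ennrealToMeasure_toENNRealVectorMeasure] at h
  obtain ⟨hacp, hacq⟩ :=
    (SignedMeasure.totalVariation_absolutelyContinuous_iff νfg ν).mp htv
  -- densities
  set fp : K → ℝ := fun x => (p.rnDeriv ν x).toReal with hfpdef
  set fq : K → ℝ := fun x => (q.rnDeriv ν x).toReal with hfqdef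
  set fa : K → ℝ := fun x => (νf.rnDeriv ν x).toReal with hfadef
  set fb : K → ℝ := fun x => (νg.rnDeriv ν x).toReal with hfbdef
  have hfp_int : Integrable fp ν := Measure.integrable_toReal_rnDeriv
  have hfq_int : Integrable fq ν := Measure.integrable_toReal_rnDeriv
  have hfa_int : Integrable fa ν := Measure.integrable_toReal_rnDeriv
  have hfb_int : Integrable fb ν := Measure.integrable_toReal_rnDeriv
  have hfa_nonneg : ∀ x, 0 ≤ fa x := fun x => ENNReal.toReal_nonneg
  have hfb_nonneg : ∀ x, 0 ≤ fb x := fun x => ENNReal.toReal_nonneg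
  -- value of the signed measure on sets
  have hsm : ∀ B : Set K, MeasurableSet B → νfg B = (p B).toReal - (q B).toReal := by
    intro B hB
    conv_lhs => rw [← νfg.toSignedMeasure_toJordanDecomposition]
    rw [JordanDecomposition.toSignedMeasure, VectorMeasure.sub_apply,
      Measure.toSignedMeasure_apply_measurable hB, Measure.toSignedMeasure_apply_measurable hB]
    rfl
  -- the key a.e. pointwise inequality
  have hg_int : ∀ t : ℚ, 0 < t →
      Integrable (fun x => ((t : ℝ) * fa x + fb x / t) / 2) ν :=
    fun t ht => (((hfa_int.const_mul _).add (hfb_int.div_const _)).div_const _)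
  have hsetint : ∀ (t : ℚ), 0 < t → ∀ B : Set K, MeasurableSet B →
      ∫ x in B, ((t : ℝ) * fa x + fb x / t) / 2 ∂ν
        = ((t : ℝ) * (νf B).toReal + (νg B).toReal / t) / 2 := by
    intro t ht B hB
    rw [integral_div, integral_add ((hfa_int.const_mul _).integrableOn)
        ((hfb_int.div_const _).integrableOn), integral_const_mul, integral_div,
      Measure.setIntegral_toReal_rnDeriv hacf B, Measure.setIntegral_toReal_rnDeriv hacg B]
    rfl
  have hbound : ∀ (t : ℚ), 0 < t → ∀ B : Set K, MeasurableSet B →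
      |νfg B| ≤ ((t : ℝ) * (νf B).toReal + (νg B).toReal / t) / 2 := by
    intro t ht B hB
    exact (hCS B hB).trans (am_gm_sqrt' ENNReal.toReal_nonneg ENNReal.toReal_nonneg
      (by exact_mod_cast ht))
  have hdiff_setint : ∀ B : Set K, MeasurableSet B →
      ∫ x in B, (fp x - fq x) ∂ν = νfg B := by
    intro B hB
    rw [integral_sub hfp_int.integrableOn hfq_int.integrableOn,
      Measure.setIntegral_toReal_rnDeriv hacp B, Measure.setIntegral_toReal_rnDeriv hacq B,
      hsm B hB]
    rfl
  have hae : ∀ t : ℚ, ∀ᵐ x ∂ν, 0 < t →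
      (fp x - fq x ≤ ((t : ℝ) * fa x + fb x / t) / 2 ∧
        -(fp x - fq x) ≤ ((t : ℝ) * fa x + fb x / t) / 2) := by
    intro t
    by_cases ht : 0 < t
    · have hpos : (fun x => fp x - fq x) ≤ᵐ[ν] fun x => ((t : ℝ) * fa x + fb x / t) / 2 := by
        refine ae_le_of_forall_setIntegral_le (hfp_int.sub hfq_int) (hg_int t ht) ?_
        intro B hB _
        rw [hdiff_setint B hB, hsetint t ht B hB]
        exact (le_abs_self _).trans (hbound t ht B hB)
      have hneg : (fun x => -(fp x - fq x)) ≤ᵐ[ν] fun x => ((t : ℝ) * fa x + fb x / t) / 2 := by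
        refine ae_le_of_forall_setIntegral_le (hfp_int.sub hfq_int).neg (hg_int t ht) ?_
        intro B hB _
        rw [integral_neg, hdiff_setint B hB, hsetint t ht B hB]
        exact (neg_le_abs _).trans (hbound t ht B hB)
      filter_upwards [hpos, hneg] with x h1 h2 _
      exact ⟨h1, h2⟩
    · exact ae_of_all _ fun x h => absurd h ht
  have key : ∀ᵐ x ∂ν, |fp x - fq x| ≤ Real.sqrt (fa x) * Real.sqrt (fb x) := by
    filter_upwards [ae_all_iff.mpr hae] with x hx
    rw [abs_le]
    constructor
    · have := le_sqrt_mul_sqrt_aux' (hfa_nonneg x) (hfb_nonneg x)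
        (fun t ht => (hx t ht).2)
      linarith
    · exact le_sqrt_mul_sqrt_aux' (hfa_nonneg x) (hfb_nonneg x) (fun t ht => (hx t ht).1)
  -- integrability of h₁ * h₂
  have hbd : ∀ x, ‖h₁ x * h₂ x‖ ≤ C₁ * C₂ := by
    intro x
    rw [Real.norm_eq_abs, abs_mul]
    exact mul_le_mul (hb₁ x) (hb₂ x) (abs_nonneg _) ((abs_nonneg _).trans (hb₁ x))
  have ihp : Integrable (fun x => h₁ x * h₂ x) p :=
    ⟨(hm₁.mul hm₂).aestronglyMeasurable,
      HasFiniteIntegral.of_bounded (C := C₁ * C₂) (ae_of_all _ hbd)⟩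
  have ihq : Integrable (fun x => h₁ x * h₂ x) q :=
    ⟨(hm₁.mul hm₂).aestronglyMeasurable,
      HasFiniteIntegral.of_bounded (C := C₁ * C₂) (ae_of_all _ hbd)⟩
  have e1 : ∫ x, h₁ x * h₂ x ∂p = ∫ x, fp x * (h₁ x * h₂ x) ∂ν := by
    rw [← integral_rnDeriv_smul hacp (f := fun x => h₁ x * h₂ x)]
    simp [smul_eq_mul]
    rfl
  have e2 : ∫ x, h₁ x * h₂ x ∂q = ∫ x, fq x * (h₁ x * h₂ x) ∂ν := by
    rw [← integral_rnDeriv_smul hacq (f := fun x => h₁ x * h₂ x)]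
    simp [smul_eq_mul]
    rfl
  have intp : Integrable (fun x => fp x * (h₁ x * h₂ x)) ν := by
    have := (integrable_rnDeriv_smul_iff hacp).mpr ihp
    simpa [smul_eq_mul] using this
  have intq : Integrable (fun x => fq x * (h₁ x * h₂ x)) ν := by
    have := (integrable_rnDeriv_smul_iff hacq).mpr ihq
    simpa [smul_eq_mul] using this
  set u : K → ℝ := fun x => |h₁ x| * Real.sqrt (fa x) with hudef
  set v : K → ℝ := fun x => |h₂ x| * Real.sqrt (fb x) with hvdef
  have hum : Measurable u := (hm₁.abs).mul ((Measure.measurable_rnDeriv νf ν).ennreal_toReal.sqrt)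
  have hvm : Measurable v := (hm₂.abs).mul ((Measure.measurable_rnDeriv νg ν).ennreal_toReal.sqrt)
  have hu_nonneg : ∀ x, 0 ≤ u x := fun x => by positivity
  have hv_nonneg : ∀ x, 0 ≤ v x := fun x => by positivity
  -- integrability of squares
  have ih1sq : Integrable (fun x => h₁ x ^ 2) νf :=
    ⟨(hm₁.pow_const 2).aestronglyMeasurable,
      HasFiniteIntegral.of_bounded (C := C₁ ^ 2) (ae_of_all _ fun x => by
        rw [Real.norm_eq_abs, abs_pow]
        exact pow_le_pow_left₀ (abs_nonneg _) (hb₁ x) 2)⟩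
  have ih2sq : Integrable (fun x => h₂ x ^ 2) νg :=
    ⟨(hm₂.pow_const 2).aestronglyMeasurable,
      HasFiniteIntegral.of_bounded (C := C₂ ^ 2) (ae_of_all _ fun x => by
        rw [Real.norm_eq_abs, abs_pow]
        exact pow_le_pow_left₀ (abs_nonneg _) (hb₂ x) 2)⟩
  have husq_eq : ∀ x, u x ^ 2 = fa x * h₁ x ^ 2 := fun x => by
    simp only [hudef, mul_pow, sq_abs, Real.sq_sqrt (hfa_nonneg x)]
    ring
  have hvsq_eq : ∀ x, v x ^ 2 = fb x * h₂ x ^ 2 := fun x => by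
    simp only [hvdef, mul_pow, sq_abs, Real.sq_sqrt (hfb_nonneg x)]
    ring
  have iusq : Integrable (fun x => u x ^ 2) ν := by
    have := (integrable_rnDeriv_smul_iff hacf (f := fun x => h₁ x ^ 2)).mpr ih1sq
    simp only [smul_eq_mul] at this
    exact this.congr (ae_of_all _ fun x => (husq_eq x).symm)
  have ivsq : Integrable (fun x => v x ^ 2) ν := by
    have := (integrable_rnDeriv_smul_iff hacg (f := fun x => h₂ x ^ 2)).mpr ih2sq
    simp only [smul_eq_mul] at this
    exact this.congr (ae_of_all _ fun x => (hvsq_eq x).symm)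
  have memu : MemLp u 2 ν :=
    (memLp_two_iff_integrable_sq hum.aestronglyMeasurable).mpr iusq
  have memv : MemLp v 2 ν :=
    (memLp_two_iff_integrable_sq hvm.aestronglyMeasurable).mpr ivsq
  have intuv : Integrable (fun x => u x * v x) ν := by
    have h12 : (1 : ℝ≥0∞) / 1 = 1 / 2 + 1 / 2 := by
      rw [ENNReal.div_add_div_same, one_add_one_eq_two,
        ENNReal.div_self two_ne_zero ENNReal.ofNat_ne_top, div_one]
    have := memLp_one_iff_integrable.mp (memv.smul memu : MemLp (u • v) 1 ν)
    simp only [smul_eq_mul] at this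
    exact this
  -- squares integrals
  have husqint : ∫ x, u x ^ 2 ∂ν = ∫ x, h₁ x ^ 2 ∂νf := by
    rw [show (∫ x, u x ^ 2 ∂ν) = ∫ x, fa x * h₁ x ^ 2 ∂ν from
        integral_congr_ae (ae_of_all _ husq_eq),
      ← integral_rnDeriv_smul hacf (f := fun x => h₁ x ^ 2)]
    simp only [smul_eq_mul, hfadef]
  have hvsqint : ∫ x, v x ^ 2 ∂ν = ∫ x, h₂ x ^ 2 ∂νg := by
    rw [show (∫ x, v x ^ 2 ∂ν) = ∫ x, fb x * h₂ x ^ 2 ∂ν from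
        integral_congr_ae (ae_of_all _ hvsq_eq),
      ← integral_rnDeriv_smul hacg (f := fun x => h₂ x ^ 2)]
    simp only [smul_eq_mul, hfbdef]
  -- Hölder (Cauchy–Schwarz)
  have hpq : (2 : ℝ).HolderConjugate 2 := Real.HolderConjugate.two_two
  have memu' : MemLp u (ENNReal.ofReal 2) ν := by
    rwa [show ENNReal.ofReal 2 = 2 by norm_num]
  have memv' : MemLp v (ENNReal.ofReal 2) ν := by
    rwa [show ENNReal.ofReal 2 = 2 by norm_num]
  have hCSint := integral_mul_norm_le_Lp_mul_Lq hpq memu' memv'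
  have hrw2 : ∀ x : ℝ, x ^ (2:ℝ) = x ^ 2 := fun x => by
    rw [show (2:ℝ) = ((2:ℕ):ℝ) by norm_num, Real.rpow_natCast]
  have hnorm_u : ∀ x, ‖u x‖ = u x := fun x => Real.norm_of_nonneg (hu_nonneg x)
  have hnorm_v : ∀ x, ‖v x‖ = v x := fun x => Real.norm_of_nonneg (hv_nonneg x)
  have hCSint' : ∫ x, u x * v x ∂ν
      ≤ Real.sqrt (∫ x, h₁ x ^ 2 ∂νf) * Real.sqrt (∫ x, h₂ x ^ 2 ∂νg) := by
    have e3 : ∫ a, ‖u a‖ * ‖v a‖ ∂ν = ∫ x, u x * v x ∂ν := by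
      simp_rw [hnorm_u, hnorm_v]
    have e4 : ∫ a, ‖u a‖ ^ (2:ℝ) ∂ν = ∫ x, h₁ x ^ 2 ∂νf := by
      simp_rw [hnorm_u, hrw2]
      exact husqint
    have e5 : ∫ a, ‖v a‖ ^ (2:ℝ) ∂ν = ∫ x, h₂ x ^ 2 ∂νg := by
      simp_rw [hnorm_v, hrw2]
      exact hvsqint
    rw [e3, e4, e5] at hCSint
    rwa [Real.sqrt_eq_rpow, Real.sqrt_eq_rpow]
  -- final chain
  rw [e1, e2, ← integral_sub intp intq]
  have intdiff : Integrable (fun x => (fp x - fq x) * (h₁ x * h₂ x)) ν := by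
    refine (intp.sub intq).congr (ae_of_all _ fun x => ?_)
    simp only [Pi.sub_apply]
    ring
  calc |∫ x, (fp x * (h₁ x * h₂ x) - fq x * (h₁ x * h₂ x)) ∂ν|
      = |∫ x, (fp x - fq x) * (h₁ x * h₂ x) ∂ν| := by
        congr 1
        exact integral_congr_ae (ae_of_all _ fun x => by ring)
    _ ≤ ∫ x, |fp x - fq x| * (|h₁ x| * |h₂ x|) ∂ν := by
        simpa [Real.norm_eq_abs, abs_mul] using
          norm_integral_le_integral_norm (μ := ν) (fun x => (fp x - fq x) * (h₁ x * h₂ x))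
    _ ≤ ∫ x, u x * v x ∂ν := by
        have intabs : Integrable (fun x => |fp x - fq x| * (|h₁ x| * |h₂ x|)) ν :=
          intdiff.abs.congr (ae_of_all _ fun x => by simp [abs_mul])
        refine integral_mono_ae intabs intuv ?_
        filter_upwards [key] with x hx
        calc |fp x - fq x| * (|h₁ x| * |h₂ x|)
            ≤ (Real.sqrt (fa x) * Real.sqrt (fb x)) * (|h₁ x| * |h₂ x|) :=
              mul_le_mul_of_nonneg_right hx (by positivity)
          _ = u x * v x := by simp only [hudef, hvdef]; ring
    _ ≤ Real.sqrt (∫ x, h₁ x ^ 2 ∂νf) * Real.sqrt (∫ x, h₂ x ^ 2 ∂νg) := hCSint'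
end

section
/- Let μ be a finite measure on a space K, E a nonnegative quadratic form on a function space F ⊂ L²(K,μ) satisfying the Poincaré inequality ‖f − ∫_K f dμ‖²_{L²} ≤ c·E(f) for all f ∈ F (with μ(K)=1). Let A ⊂ K be measurable with μ(K∖A) = a > 0. Then every f ∈ F vanishing a.e. on K∖A satisfies ‖f‖²_{L²(K,μ)} ≤ (c + 2c/a)·E(f). -/
open MeasureTheory

theorem stmt_9 {K : Type*} [MeasurableSpace K] (μ : Measure K)
    [IsProbabilityMeasure μ]
    (F : Set (K → ℝ)) (E : (K → ℝ) → ℝ) (hEnn : ∀ f, 0 ≤ E f)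
    (c : ℝ) (hc : 0 < c)
    (hPoincare : ∀ f ∈ F,
      ∫ x, (f x - ∫ y, f y ∂μ) ^ 2 ∂μ ≤ c * E f)
    (A : Set K) (hA : MeasurableSet A)
    (a : ℝ) (ha : a = (μ Aᶜ).toReal) (hapos : 0 < a)
    (f : K → ℝ) (hfF : f ∈ F) (hf2 : MemLp f 2 μ)
    (hvanish : ∀ᵐ x ∂μ, x ∈ Aᶜ → f x = 0) :
    ∫ x, (f x) ^ 2 ∂μ ≤ (c + 2 * c / a) * E f := by
  set m : ℝ := ∫ y, f y ∂μ with hm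
  have hfint : Integrable f μ := hf2.integrable one_le_two
  have hfsq : Integrable (fun x => (f x) ^ 2) μ := hf2.integrable_sq
  have hsub : MemLp (fun x => f x - m) 2 μ := hf2.sub (memLp_const m)
  have hsubsq : Integrable (fun x => (f x - m) ^ 2) μ := hsub.integrable_sq
  -- expansion
  have hexp : ∫ x, (f x - m) ^ 2 ∂μ = (∫ x, (f x) ^ 2 ∂μ) - m ^ 2 := by
    have h1 : (fun x => (f x - m) ^ 2) = fun x => (f x) ^ 2 - (2 * m * f x - m ^ 2) := by
      funext x; ring
    have h2int : Integrable (fun x => 2 * m * f x - m ^ 2) μ :=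
      (hfint.const_mul (2 * m)).sub (integrable_const _)
    rw [h1, integral_sub hfsq h2int,
      integral_sub (hfint.const_mul (2 * m)) (integrable_const (m ^ 2)),
      integral_const_mul, integral_const]
    simp [← hm]
    ring
  -- Chebyshev
  have hcheb : a * m ^ 2 ≤ ∫ x, (f x - m) ^ 2 ∂μ := by
    have h1 : ∫ x in Aᶜ, (f x - m) ^ 2 ∂μ = ∫ x in Aᶜ, m ^ 2 ∂μ := by
      apply setIntegral_congr_ae hA.compl
      filter_upwards [hvanish] with x hx hxA
      rw [hx hxA]; ring
    have h2 : ∫ x in Aᶜ, m ^ 2 ∂μ = a * m ^ 2 := by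
      rw [setIntegral_const, ha]; simp [smul_eq_mul, measureReal_def]
    have h3 : ∫ x in Aᶜ, (f x - m) ^ 2 ∂μ ≤ ∫ x, (f x - m) ^ 2 ∂μ := by
      apply setIntegral_le_integral hsubsq
      filter_upwards with x using sq_nonneg _
    linarith
  have hP := hPoincare f hfF
  have hmsq : m ^ 2 ≤ c / a * E f := by
    rw [div_mul_eq_mul_div, le_div_iff₀ hapos]
    nlinarith
  have hca : c / a * E f ≤ 2 * c / a * E f := by
    have : c / a ≤ 2 * c / a := by gcongr <;> linarith
    exact mul_le_mul_of_nonneg_right this (hEnn f)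
  nlinarith [hEnn f]
end
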